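/- Let G be a group and V a Banach space. The G-module B(G,V) of bounded functions f : G → V, with norm sup_{g}‖f(g)‖ and action (h·f)(g) = f(gh), is relatively injective: for any injective G-morphism i : V₁ → V₂ of Banach G-modules admitting a (not necessarily equivariant) bounded linear left inverse σ with ‖σ‖ ≤ 1, and any G-morphism α : V₁ → B(G,V), there exists a G-morphism β : V₂ → B(G,V) with β ∘ i = α and ‖β‖ ≤ ‖α‖. -/
import Mathlib


/-- **Ivanov.** For a group `G` and a Banach space `V`, the Banach `G`-module
`B(G,V)` of bounded functions `G → V` (sup norm, action `(h·f)(g) = f(g*h)`) is relatively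
injective: given Banach `G`-modules `V₁, V₂` (norm-nonincreasing linear actions), an
injective `G`-morphism `i : V₁ → V₂` admitting a (not necessarily equivariant) bounded
linear left inverse `σ` with `‖σ‖ ≤ 1`, and a `G`-morphism `α : V₁ → B(G,V)`, there is a
`G`-morphism `β : V₂ → B(G,V)` with `β ∘ i = α` and `‖β‖ ≤ ‖α‖`. -/
theorem boundedFunctions_relatively_injective
    (G : Type) [Group G] [TopologicalSpace G] [DiscreteTopology G]
    (V : Type) [NormedAddCommGroup V] [NormedSpace ℝ V] [CompleteSpace V]
    (V₁ : Type) [NormedAddCommGroup V₁] [NormedSpace ℝ V₁] [CompleteSpace V₁]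
    (V₂ : Type) [NormedAddCommGroup V₂] [NormedSpace ℝ V₂] [CompleteSpace V₂]
    [DistribMulAction G V₁] [DistribMulAction G V₂]
    (h₁lin : ∀ (g : G) (c : ℝ) (v : V₁), g • (c • v) = c • (g • v))
    (h₂lin : ∀ (g : G) (c : ℝ) (v : V₂), g • (c • v) = c • (g • v))
    (h₁norm : ∀ (g : G) (v : V₁), ‖g • v‖ ≤ ‖v‖)
    (h₂norm : ∀ (g : G) (v : V₂), ‖g • v‖ ≤ ‖v‖)
    (i : V₁ →L[ℝ] V₂) (hi : Function.Injective i)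
    (hiequiv : ∀ (g : G) (v : V₁), i (g • v) = g • i v)
    (σ : V₂ →L[ℝ] V₁) (hσi : ∀ v : V₁, σ (i v) = v) (hσ : ‖σ‖ ≤ 1)
    (α : V₁ →L[ℝ] BoundedContinuousFunction G V)
    (hαequiv : ∀ (g : G) (v : V₁) (x : G), α (g • v) x = α v (x * g)) :
    ∃ β : V₂ →L[ℝ] BoundedContinuousFunction G V,
      (∀ (g : G) (v : V₂) (x : G), β (g • v) x = β v (x * g)) ∧
      (∀ v : V₁, β (i v) = α v) ∧ ‖β‖ ≤ ‖α‖ := by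
  have hbound : ∀ (v : V₂) (x : G), ‖α (σ (x • v)) 1‖ ≤ ‖α‖ * ‖v‖ := by
    intro v x
    calc ‖α (σ (x • v)) 1‖ ≤ ‖α (σ (x • v))‖ :=
          BoundedContinuousFunction.norm_coe_le_norm _ _
      _ ≤ ‖α‖ * ‖σ (x • v)‖ := α.le_opNorm _
      _ ≤ ‖α‖ * ‖x • v‖ := by
          refine mul_le_mul_of_nonneg_left ?_ (norm_nonneg _)
          calc ‖σ (x • v)‖ ≤ ‖σ‖ * ‖x • v‖ := σ.le_opNorm _
            _ ≤ 1 * ‖x • v‖ := mul_le_mul_of_nonneg_right hσ (norm_nonneg _)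
            _ = ‖x • v‖ := one_mul _
      _ ≤ ‖α‖ * ‖v‖ := mul_le_mul_of_nonneg_left (h₂norm x v) (norm_nonneg _)
  let F : V₂ → BoundedContinuousFunction G V := fun v =>
    BoundedContinuousFunction.ofNormedAddCommGroup (fun x => α (σ (x • v)) 1)
      continuous_of_discreteTopology (‖α‖ * ‖v‖) (hbound v)
  have hF : ∀ v x, F v x = α (σ (x • v)) 1 := fun v x => rfl
  let L : V₂ →ₗ[ℝ] BoundedContinuousFunction G V :=
    { toFun := F
      map_add' := by
        intro u w
        ext x
        simp [hF, smul_add]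
      map_smul' := by
        intro c u
        ext x
        simp [hF, h₂lin] }
  have hLnorm : ∀ v, ‖L v‖ ≤ ‖α‖ * ‖v‖ := fun v =>
    BoundedContinuousFunction.norm_ofNormedAddCommGroup_le
      continuous_of_discreteTopology
      (mul_nonneg (norm_nonneg _) (norm_nonneg _)) (hbound v)
  refine ⟨L.mkContinuous ‖α‖ hLnorm, ?_, ?_, ?_⟩
  · intro g v x
    show F (g • v) x = F v (x * g)
    simp [hF, mul_smul]
  · intro v
    ext x
    show F (i v) x = α v x
    rw [hF, ← hiequiv, hσi, hαequiv, one_mul]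
  · exact L.mkContinuous_norm_le (norm_nonneg _) hLnorm
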